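/- Let S be a doubly infinite sequence over a field, with number wall W_{m,n} = det of the (m+1)×(m+1) Toeplitz matrix (s_{i-j+n}). If W_{m-1,n} = 0 and W_{m,n-1} ≠ 0 and W_{m,n+1} ≠ 0 for some m ≥ 1, then W_{m,n} ≠ 0. (Zero entries adjacent horizontally to nonzero entries with a zero above cannot occur: the square-window structure forces this.) -/
import Mathlib

open Matrix Finset

/-- The number wall of a doubly infinite sequence `s` over a field:
`W_{m,n} = det (s_{i-j+n})_{0 ≤ i,j ≤ m}` for `m ≥ 0`, with `W_{-1,n} = 1`
and `W_{m,n} = 0` for `m < -1`. -/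
noncomputable def numberWall {K : Type*} [Field K] (s : ℤ → K) (m n : ℤ) : K :=
  if m < -1 then 0
  else if m = -1 then 1
  else Matrix.det (Matrix.of fun i j : Fin (m.toNat + 1) => s ((i : ℤ) - (j : ℤ) + n))


lemma key {K : Type*} [Field K] (s : ℤ → K) (n : ℤ) (k : ℕ)
    (h0 : (Matrix.of fun i j : Fin (k+1) => s ((i : ℤ) - (j : ℤ) + n)).det = 0)
    (hl : (Matrix.of fun i j : Fin (k+2) => s ((i : ℤ) - (j : ℤ) + (n-1))).det ≠ 0)
    (hr : (Matrix.of fun i j : Fin (k+2) => s ((i : ℤ) - (j : ℤ) + (n+1))).det ≠ 0) :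
    (Matrix.of fun i j : Fin (k+2) => s ((i : ℤ) - (j : ℤ) + n)).det ≠ 0 := by
  intro hA
  obtain ⟨d, hd0, hMd⟩ := (Matrix.exists_mulVec_eq_zero_iff).mpr h0
  obtain ⟨r, hr0, hrA⟩ := (Matrix.exists_vecMul_eq_zero_iff).mpr hA
  have hMd' : ∀ i : Fin (k+1), ∑ j : Fin (k+1), s ((i:ℤ) - (j:ℤ) + n) * d j = 0 := by
    intro i
    have := congrFun hMd i
    simpa [Matrix.mulVec, dotProduct] using this
  have hrA' : ∀ j : Fin (k+2), ∑ i : Fin (k+2), r i * s ((i:ℤ) - (j:ℤ) + n) = 0 := by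
    intro j
    have := congrFun hrA j
    simpa [Matrix.vecMul, dotProduct] using this
  set β : K := ∑ j : Fin (k+1), s (-1 - (j:ℤ) + n) * d j with hβ
  -- β ≠ 0
  have hβ0 : β ≠ 0 := by
    intro hb
    apply hl
    rw [← Matrix.exists_mulVec_eq_zero_iff]
    refine ⟨Fin.snoc d 0, ?_, ?_⟩
    · intro h
      apply hd0
      funext j
      simpa using congrFun h j.castSucc
    · funext i
      have h1 : ((Matrix.of fun i j : Fin (k+2) => s ((i : ℤ) - (j : ℤ) + (n-1))) *ᵥ
          Fin.snoc d 0) i = ∑ j : Fin (k+1), s ((i:ℤ) - (j:ℤ) + (n-1)) * d j := by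
        simp [Matrix.mulVec, dotProduct, Fin.sum_univ_castSucc]
      rw [h1]
      induction i using Fin.cases with
      | zero =>
        rw [Pi.zero_apply, ← hb, hβ]
        apply Finset.sum_congr rfl
        intro j _
        congr 2
        simp
        ring
      | succ i' =>
        rw [Pi.zero_apply, ← hMd' i']
        apply Finset.sum_congr rfl
        intro j _
        congr 2
        rw [Fin.val_succ]
        push_cast
        ring
  -- r 0 = 0
  have hr00 : r 0 = 0 := by
    have key0 : ∑ i : Fin (k+2), r i * (∑ j : Fin (k+1), s ((i:ℤ) - ((j:ℤ)+1) + n) * d j) = 0 := by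
      have hc : ∀ i : Fin (k+2), ∑ j : Fin (k+1), s ((i:ℤ) - ((j:ℤ)+1) + n) * d j
          = ∑ j : Fin (k+2), s ((i:ℤ) - (j:ℤ) + n) * (Fin.cons 0 d : Fin (k+2) → K) j := by
        intro i
        conv_rhs => rw [Fin.sum_univ_succ]
        simp only [Fin.cons_zero, Fin.cons_succ, mul_zero, zero_add]
        apply Finset.sum_congr rfl
        intro j _
        have hj : ((j.succ : Fin (k+2)) : ℤ) = (j : ℤ) + 1 := by
          simp [Fin.val_succ]
        rw [hj]
      simp_rw [hc, Finset.mul_sum]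
      rw [Finset.sum_comm]
      apply Finset.sum_eq_zero
      intro j _
      have h2 : ∑ i : Fin (k+2), r i * (s ((i:ℤ) - (j:ℤ) + n) * (Fin.cons 0 d : Fin (k+2) → K) j)
          = (Fin.cons 0 d : Fin (k+2) → K) j * ∑ i : Fin (k+2), r i * s ((i:ℤ) - (j:ℤ) + n) := by
        rw [Finset.mul_sum]
        apply Finset.sum_congr rfl
        intro i _
        ring
      rw [h2, hrA' j, mul_zero]
    -- on the other hand, inner sums vanish except i = 0 where they give β
    have key1 : ∀ i' : Fin (k+1), ∑ j : Fin (k+1), s ((i'.succ:ℤ) - ((j:ℤ)+1) + n) * d j = 0 := by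
      intro i'
      rw [← hMd' i']
      apply Finset.sum_congr rfl
      intro j _
      congr 2
      rw [Fin.val_succ]
      push_cast
      ring
    have key2 : ∑ j : Fin (k+1), s (((0:Fin (k+2)):ℤ) - ((j:ℤ)+1) + n) * d j = β := by
      rw [hβ]
      apply Finset.sum_congr rfl
      intro j _
      congr 2
      simp
      ring
    rw [Fin.sum_univ_succ, key2] at key0
    have : ∑ i : Fin (k+1), r i.succ * ∑ j : Fin (k+1), s ((i.succ:ℤ) - ((j:ℤ)+1) + n) * d j = 0 := by
      apply Finset.sum_eq_zero
      intro i _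
      rw [key1 i, mul_zero]
    rw [this, add_zero] at key0
    exact (mul_eq_zero.mp key0).resolve_right hβ0
  -- contradiction with hr
  apply hr
  rw [← Matrix.exists_vecMul_eq_zero_iff]
  refine ⟨Fin.snoc (fun i : Fin (k+1) => r i.succ) 0, ?_, ?_⟩
  · intro h
    apply hr0
    funext i
    induction i using Fin.cases with
    | zero => exact hr00
    | succ i' => simpa using congrFun h i'.castSucc
  · funext j
    have h3 : ((Fin.snoc (fun i : Fin (k+1) => r i.succ) (0:K) : Fin (k+2) → K) ᵥ*
        (Matrix.of fun i j : Fin (k+2) => s ((i : ℤ) - (j : ℤ) + (n+1)))) j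
        = ∑ i : Fin (k+1), r i.succ * s ((i:ℤ) - (j:ℤ) + (n+1)) := by
      simp [Matrix.vecMul, dotProduct, Fin.sum_univ_castSucc]
    rw [h3, Pi.zero_apply]
    have h4 := hrA' j
    rw [Fin.sum_univ_succ, hr00, zero_mul, zero_add] at h4
    rw [← h4]
    apply Finset.sum_congr rfl
    intro i _
    congr 2
    rw [Fin.val_succ]
    push_cast
    ring

/-- If `W_{m-1,n} = 0` while `W_{m,n-1} ≠ 0` and `W_{m,n+1} ≠ 0`, then `W_{m,n} ≠ 0`. -/
theorem numberWall_nonzero_of_zero_above {K : Type*} [Field K] (s : ℤ → K)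
    (m n : ℤ) (hm : 1 ≤ m)
    (h0 : numberWall s (m - 1) n = 0)
    (hl : numberWall s m (n - 1) ≠ 0)
    (hr : numberWall s m (n + 1) ≠ 0) :
    numberWall s m n ≠ 0 := by
  have cast : ∀ {a b : ℕ} (h : a = b) (g : ℤ → ℤ → K),
      (Matrix.of fun i j : Fin a => g i j).det = (Matrix.of fun i j : Fin b => g i j).det := by
    rintro a b rfl g; rfl
  obtain ⟨k, hk⟩ : ∃ k : ℕ, m.toNat = k + 1 := ⟨(m-1).toNat, by omega⟩
  simp only [numberWall, if_neg (by omega : ¬ m - 1 < -1), if_neg (by omega : ¬ (m - 1 = -1))]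
    at h0
  simp only [numberWall, if_neg (by omega : ¬ m < -1), if_neg (by omega : ¬ (m = -1))]
    at hl hr ⊢
  rw [← cast (show k+1 = (m-1).toNat + 1 by omega) (fun a b => s (a - b + n))] at h0
  rw [← cast (show k+2 = m.toNat + 1 by omega) (fun a b => s (a - b + (n-1)))] at hl
  rw [← cast (show k+2 = m.toNat + 1 by omega) (fun a b => s (a - b + (n+1)))] at hr
  rw [← cast (show k+2 = m.toNat + 1 by omega) (fun a b => s (a - b + n))]
  exact key s n k h0 hl hr
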